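/- Fix integers d ≥ 2 and n ≥ 2. There exists a bijection f of the grid {0,…,n−1}^d to itself such that for all distinct points p, q, the L∞ distance between p and q plus the L∞ distance between f(p) and f(q) is at least 2⌊√(n/3)⌋. Moreover, for every bijection g of {0,…,n−1}^d to itself, there exist distinct p, q with combined L∞ distance at most ⌈√(n−1)⌉ + ⌊√(n−1)⌋. -/

import Mathlib

namespace S17

/-- interleaver permutation of `[0,h)` -/
def pi0 (h i : ℕ) : ℕ := if i % 2 = 0 then i / 2 else (h + 1) / 2 + i / 2

lemma pi0_lt (h i : ℕ) (hi : i < h) : pi0 h i < h := by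
  unfold pi0; split_ifs <;> omega

lemma pi0_inj (h i i' : ℕ) (hi : i < h) (hi' : i' < h) (he : pi0 h i = pi0 h i') : i = i' := by
  unfold pi0 at he; split_ifs at he <;> omega

/-- height of column j -/
def hgt (n k j : ℕ) : ℕ := n / (k+2) + (if j < n % (k+2) then 1 else 0)

/-- offset of column j -/
def off (n k j : ℕ) : ℕ := j * (n / (k+2)) + min j (n % (k+2))

/-- the 1-D permutation of [0,n) -/
def sig (n k x : ℕ) : ℕ := off n k (x % (k+2)) + pi0 (hgt n k (x % (k+2))) (x / (k+2))

lemma off_step (n k j : ℕ) : off n k (j+1) = off n k j + hgt n k j := by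
  unfold off hgt
  have : (j+1) * (n / (k+2)) = j * (n/(k+2)) + n/(k+2) := by ring
  split_ifs <;> omega

lemma off_mono (n k : ℕ) {j j' : ℕ} (h : j ≤ j') : off n k j ≤ off n k j' := by
  induction j' with
  | zero => simpa using h.antisymm (Nat.zero_le _) ▸ le_rfl
  | succ m ih =>
    rcases Nat.lt_or_ge j (m+1) with h1 | h1
    · exact (ih (by omega)).trans (by rw [off_step]; omega)
    · have : j = m+1 := by omega
      simp [this]

lemma off_top (n k : ℕ) : off n k (k+2) = n := by
  unfold off
  have h1 := Nat.div_add_mod n (k+2)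
  have h2 : n % (k+2) < k+2 := Nat.mod_lt _ (by omega)
  have : (k+2) * (n/(k+2)) = n/(k+2) * (k+2) := by ring
  omega

lemma sig_decomp (n k i j : ℕ) (hj : j < k+2) :
    sig n k ((k+2) * i + j) = off n k j + pi0 (hgt n k j) i := by
  unfold sig
  rw [Nat.mul_add_mod, Nat.mod_eq_of_lt hj, Nat.mul_add_div (by omega), Nat.div_eq_of_lt hj,
    Nat.add_zero]

lemma row_lt_hgt (n k x : ℕ) (hx : x < n) : x / (k+2) < hgt n k (x % (k+2)) := by
  have h1 := Nat.div_add_mod x (k+2)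
  have h2 := Nat.div_add_mod n (k+2)
  have h3 : x % (k+2) < k+2 := Nat.mod_lt _ (by omega)
  have h4 : x / (k+2) ≤ n / (k+2) := Nat.div_le_div_right (le_of_lt hx)
  unfold hgt
  split_ifs with hc
  · omega
  · -- need x/(k+2) < n/(k+2)
    rcases Nat.lt_or_ge (x / (k+2)) (n / (k+2)) with h | h
    · omega
    · exfalso
      have he : x / (k+2) = n / (k+2) := le_antisymm h4 h
      rw [he] at h1
      omega

lemma sig_lt (n k x : ℕ) (hx : x < n) : sig n k x < n := by
  have h3 : x % (k+2) < k+2 := Nat.mod_lt _ (by omega)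
  have h5 := row_lt_hgt n k x hx
  have h6 := pi0_lt _ _ h5
  have h7 : off n k (x % (k+2)) + hgt n k (x % (k+2)) = off n k (x % (k+2) + 1) :=
    (off_step n k _).symm
  have h8 : off n k (x % (k+2) + 1) ≤ off n k (k+2) := off_mono n k (by omega)
  rw [off_top] at h8
  unfold sig
  omega

lemma sig_inj (n k x y : ℕ) (hx : x < n) (hy : y < n) (he : sig n k x = sig n k y) : x = y := by
  have h3 : x % (k+2) < k+2 := Nat.mod_lt _ (by omega)
  have h3' : y % (k+2) < k+2 := Nat.mod_lt _ (by omega)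
  have h5 := row_lt_hgt n k x hx
  have h5' := row_lt_hgt n k y hy
  have h6 := pi0_lt _ _ h5
  have h6' := pi0_lt _ _ h5'
  have hcol : x % (k+2) = y % (k+2) := by
    by_contra hne
    rcases Nat.lt_or_ge (x % (k+2)) (y % (k+2)) with h | h
    · have g1 : off n k (x % (k+2)) + hgt n k (x % (k+2)) ≤ off n k (y % (k+2)) := by
        rw [← off_step]; exact off_mono n k (by omega)
      unfold sig at he; omega
    · have h' : y % (k+2) < x % (k+2) := by omega
      have g1 : off n k (y % (k+2)) + hgt n k (y % (k+2)) ≤ off n k (x % (k+2)) := by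
        rw [← off_step]; exact off_mono n k (by omega)
      unfold sig at he; omega
  unfold sig at he
  rw [hcol] at he h5
  have hd : x / (k+2) = y / (k+2) := pi0_inj _ _ _ h5 h5' (by omega)
  have hx1 := Nat.div_add_mod x (k+2)
  have hy1 := Nat.div_add_mod y (k+2)
  rw [hd] at hx1
  omega



lemma hgt_ge (n k j : ℕ) : n / (k+2) ≤ hgt n k j := by
  unfold hgt; split_ifs <;> omega

lemma hgt_le (n k j : ℕ) : hgt n k j ≤ n / (k+2) + 1 := by
  unfold hgt; split_ifs <;> omega

lemma hgt_anti (n k : ℕ) {j j' : ℕ} (h : j ≤ j') : hgt n k j' ≤ hgt n k j := by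
  unfold hgt; split_ifs <;> omega

lemma sig_spread (n k x y : ℕ) (hk : 1 ≤ k) (hn : 3*(k*k) ≤ n) (hy : y < n) (hxy : x < y) :
    2*k ≤ (y - x) + (max (sig n k x) (sig n k y) - min (sig n k x) (sig n k y)) := by
  have hx : x < n := lt_trans hxy hy
  -- A ≥ 2k-1
  have hA : 2*k ≤ n/(k+2) + 1 := by
    have h1 : (2*k-1)*(k+2) ≤ n := by
      obtain ⟨m, rfl⟩ : ∃ m, k = m + 1 := ⟨k-1, by omega⟩
      have hm : m ≤ m*m := by
        rcases Nat.eq_zero_or_pos m with h|h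
        · simp [h]
        · exact Nat.le_mul_of_pos_left m h
      have e0 : 2*(m+1)-1 = 2*m+1 := by omega
      rw [e0]
      have e2 : (2*m+1)*((m+1)+2) = 2*(m*m)+7*m+3 := by ring
      have e3 : 3*((m+1)*(m+1)) = 3*(m*m)+6*m+3 := by ring
      omega
    have := (Nat.le_div_iff_mul_le (show 0 < k+2 by omega)).mpr h1
    omega
  set A := n / (k+2) with hAdef
  set i1 := x / (k+2) with hi1def
  set j1 := x % (k+2) with hj1def
  set i2 := y / (k+2) with hi2def
  set j2 := y % (k+2) with hj2def
  have hj1B : j1 < k+2 := Nat.mod_lt _ (by omega)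
  have hj2B : j2 < k+2 := Nat.mod_lt _ (by omega)
  have hx_eq : (k+2) * i1 + j1 = x := Nat.div_add_mod x (k+2)
  have hy_eq : (k+2) * i2 + j2 = y := Nat.div_add_mod y (k+2)
  have hvx : sig n k x = off n k j1 + pi0 (hgt n k j1) i1 := by
    rw [← hx_eq]; exact sig_decomp n k i1 j1 hj1B
  have hvy : sig n k y = off n k j2 + pi0 (hgt n k j2) i2 := by
    rw [← hy_eq]; exact sig_decomp n k i2 j2 hj2B
  have hi1h : i1 < hgt n k j1 := row_lt_hgt n k x hx
  have hi2h : i2 < hgt n k j2 := row_lt_hgt n k y hy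
  have hH1c : hgt n k j1 = A ∨ hgt n k j1 = A + 1 := by
    have := hgt_ge n k j1; have := hgt_le n k j1; omega
  have hH2c : hgt n k j2 = A ∨ hgt n k j2 = A + 1 := by
    have := hgt_ge n k j2; have := hgt_le n k j2; omega
  rcases lt_trichotomy j1 j2 with hj | hj | hj
  · -- j1 < j2
    rcases Nat.lt_or_ge j2 (j1 + 2) with hj' | hj'
    · -- j2 = j1 + 1
      have hj2e : j2 = j1 + 1 := by omega
      have hstep : off n k j2 = off n k j1 + hgt n k j1 := by rw [hj2e]; exact off_step n k j1
      have hHle : hgt n k j2 ≤ hgt n k j1 := hgt_anti n k (by omega)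
      -- i2 ≥ i1
      have hge : i1 ≤ i2 := by
        by_contra hlt
        have : i2 + 1 ≤ i1 := by omega
        have := Nat.mul_le_mul_left (k+2) this
        have e1 : (k+2)*(i2+1) = (k+2)*i2 + (k+2) := by ring
        omega
      rcases Nat.lt_or_ge (i1 + 2) (i2 + 1) with hc | hc
      · -- i2 ≥ i1 + 2 : positional
        have := Nat.mul_le_mul_left (k+2) (show i1 + 2 ≤ i2 by omega)
        have e1 : (k+2)*(i1+2) = (k+2)*i1 + (2*k+4) := by ring
        omega
      · rcases Nat.lt_or_ge i1 i2 with hc2 | hc2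
        · -- i2 = i1 + 1
          have hi2e : i2 = i1 + 1 := by omega
          have e1 : (k+2)*(i1+1) = (k+2)*i1 + (k+2) := by ring
          rw [hi2e] at hy_eq hvy
          rw [hvx, hvy, hstep]
          simp only [pi0]
          rcases hH1c with h1 | h1 <;> rcases hH2c with h2 | h2 <;>
            rw [h1, h2] at hHle ⊢ <;> split_ifs <;> omega
        · -- i2 = i1
          have hi2e : i2 = i1 := by omega
          rw [hi2e] at hy_eq hvy
          rw [hvx, hvy, hstep]
          simp only [pi0]
          rcases hH1c with h1 | h1 <;> rcases hH2c with h2 | h2 <;>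
            rw [h1, h2] at hHle ⊢ <;> split_ifs <;> omega
    · -- j2 ≥ j1 + 2 : column gap
      have g1 : sig n k x < off n k (j1+1) := by
        rw [hvx, off_step]
        have := pi0_lt _ _ hi1h; omega
      have g2 : off n k j2 ≤ sig n k y := by rw [hvy]; omega
      have g3 : off n k (j1+2) ≤ off n k j2 := off_mono n k (by omega)
      have g4 : off n k (j1+2) = off n k (j1+1) + hgt n k (j1+1) := off_step n k (j1+1)
      have g5 : A ≤ hgt n k (j1+1) := hgt_ge n k (j1+1)
      omega
  · -- same column
    rw [hj] at hvx hi1h hH1c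
    have hlt : i1 < i2 := by
      by_contra hlt
      have : i2 ≤ i1 := by omega
      have := Nat.mul_le_mul_left (k+2) this
      omega
    rcases Nat.lt_or_ge (i1 + 1) i2 with hc | hc
    · -- gap ≥ 2 : positional
      have := Nat.mul_le_mul_left (k+2) (show i1 + 2 ≤ i2 by omega)
      have e1 : (k+2)*(i1+2) = (k+2)*i1 + (2*k+4) := by ring
      omega
    · have hi2e : i2 = i1 + 1 := by omega
      have e1 : (k+2)*(i1+1) = (k+2)*i1 + (k+2) := by ring
      rw [hi2e] at hy_eq hvy
      rw [hvx, hvy]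
      simp only [pi0]
      rcases hH2c with h2 | h2 <;> rw [h2] <;> split_ifs <;> omega
  · -- j2 < j1
    rcases Nat.lt_or_ge j1 (j2 + 2) with hj' | hj'
    · -- j1 = j2 + 1
      have hj1e : j1 = j2 + 1 := by omega
      have hstep : off n k j1 = off n k j2 + hgt n k j2 := by rw [hj1e]; exact off_step n k j2
      have hHle : hgt n k j1 ≤ hgt n k j2 := hgt_anti n k (by omega)
      have hge : i1 + 1 ≤ i2 := by
        by_contra hlt
        have : i2 ≤ i1 := by omega
        have := Nat.mul_le_mul_left (k+2) this
        omega
      rcases Nat.lt_or_ge (i1 + 2) (i2 + 1) with hc | hc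
      · -- i2 ≥ i1 + 2 : positional
        have := Nat.mul_le_mul_left (k+2) (show i1 + 2 ≤ i2 by omega)
        have e1 : (k+2)*(i1+2) = (k+2)*i1 + (2*k+4) := by ring
        omega
      · have hi2e : i2 = i1 + 1 := by omega
        have e1 : (k+2)*(i1+1) = (k+2)*i1 + (k+2) := by ring
        rw [hi2e] at hy_eq hvy
        rw [hvx, hvy, hstep]
        simp only [pi0]
        rcases hH1c with h1 | h1 <;> rcases hH2c with h2 | h2 <;>
          rw [h1, h2] at hHle ⊢ <;> split_ifs <;> omega
    · -- j1 ≥ j2 + 2 : column gap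
      have g1 : sig n k y < off n k (j2+1) := by
        rw [hvy, off_step]
        have := pi0_lt _ _ hi2h; omega
      have g2 : off n k j1 ≤ sig n k x := by rw [hvx]; omega
      have g3 : off n k (j2+2) ≤ off n k j1 := off_mono n k (by omega)
      have g4 : off n k (j2+2) = off n k (j2+1) + hgt n k (j2+1) := off_step n k (j2+1)
      have g5 : A ≤ hgt n k (j2+1) := hgt_ge n k (j2+1)
      omega


lemma sig_surj (n k v : ℕ) (hv : v < n) : ∃ x, x < n ∧ sig n k x = v := by
  have h := Finset.surj_on_of_inj_on_of_card_le (s := Finset.range n) (t := Finset.range n)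
    (fun a _ => sig n k a)
    (fun a ha => Finset.mem_range.mpr (sig_lt n k a (Finset.mem_range.mp ha)))
    (fun a b ha hb he => sig_inj n k a b (Finset.mem_range.mp ha) (Finset.mem_range.mp hb) he)
    le_rfl v (Finset.mem_range.mpr hv)
  obtain ⟨a, ha, he⟩ := h
  exact ⟨a, Finset.mem_range.mp ha, he.symm⟩

/-- integer version of sig -/
def zsig (n k : ℕ) (z : ℤ) : ℤ := if 0 ≤ z ∧ z < (n:ℤ) then ((sig n k z.toNat : ℕ) : ℤ) else z

lemma zsig_in (n k : ℕ) (z : ℤ) (h0 : 0 ≤ z) (h1 : z < n) :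
    zsig n k z = ((sig n k z.toNat : ℕ) : ℤ) := by
  unfold zsig; rw [if_pos ⟨h0, h1⟩]

lemma floor_sqrt_third (n : ℕ) : ⌊Real.sqrt ((n:ℝ)/3)⌋ = (Nat.sqrt (n/3) : ℤ) := by
  have hk3 : 3*(Nat.sqrt (n/3) * Nat.sqrt (n/3)) ≤ n := by
    have h1 : Nat.sqrt (n/3) * Nat.sqrt (n/3) ≤ n/3 := Nat.sqrt_le _
    omega
  have hk4 : n < 3*((Nat.sqrt (n/3) + 1) * (Nat.sqrt (n/3) + 1)) := by
    have h1 : n/3 < (Nat.sqrt (n/3)).succ * (Nat.sqrt (n/3)).succ := Nat.lt_succ_sqrt _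
    simp only [Nat.succ_eq_add_one] at h1
    omega
  set k := Nat.sqrt (n/3) with hkdef
  rw [Int.floor_eq_iff]
  constructor
  · rw [show ((k:ℤ):ℝ) = (k:ℝ) by push_cast; ring]
    rw [Real.le_sqrt (by positivity) (by positivity)]
    have : ((3*(k*k) : ℕ) : ℝ) ≤ (n:ℝ) := by exact_mod_cast hk3
    push_cast at this ⊢
    nlinarith
  · have h2 : Real.sqrt ((n:ℝ)/3) < (k:ℝ)+1 := by
      rw [Real.sqrt_lt' (by positivity)]
      have : (n:ℝ) < ((3*((k+1)*(k+1)) : ℕ) : ℝ) := by exact_mod_cast hk4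
      push_cast at this ⊢
      nlinarith
    push_cast
    exact h2

lemma sqrt_le_self' (m : ℕ) (hm : 1 ≤ m) : Real.sqrt (m:ℝ) ≤ (m:ℝ) := by
  have h : ((m:ℝ)) ≤ ((m:ℝ))^2 := by
    have : (1:ℝ) ≤ (m:ℝ) := by exact_mod_cast hm
    nlinarith
  calc Real.sqrt (m:ℝ) ≤ Real.sqrt ((m:ℝ)^2) := Real.sqrt_le_sqrt h
    _ = (m:ℝ) := Real.sqrt_sq (by positivity)


lemma part1 (d n : ℕ) (hn : 2 ≤ n) :
    ∃ f : (Fin d → ℤ) → (Fin d → ℤ),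
      Set.BijOn f {p | ∀ i, 0 ≤ p i ∧ p i ≤ (n : ℤ) - 1}
        {p | ∀ i, 0 ≤ p i ∧ p i ≤ (n : ℤ) - 1} ∧
      ∀ p ∈ {p : Fin d → ℤ | ∀ i, 0 ≤ p i ∧ p i ≤ (n : ℤ) - 1},
        ∀ q ∈ {p : Fin d → ℤ | ∀ i, 0 ≤ p i ∧ p i ≤ (n : ℤ) - 1}, p ≠ q →
          2 * ⌊Real.sqrt ((n : ℝ) / 3)⌋ ≤
            ((Finset.univ.sup fun i => (q i - p i).natAbs : ℕ) : ℤ) +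
              ((Finset.univ.sup fun i => (f q i - f p i).natAbs : ℕ) : ℤ) := by
  set k := Nat.sqrt (n/3) with hkdef
  have hk3 : 3*(k*k) ≤ n := by
    have h1 : k * k ≤ n/3 := by rw [hkdef]; exact Nat.sqrt_le _
    omega
  refine ⟨fun p i => zsig n k (p i), ⟨?_, ?_, ?_⟩, ?_⟩
  · -- MapsTo
    intro p hp i
    obtain ⟨h0, h1⟩ := hp i
    show 0 ≤ zsig n k (p i) ∧ zsig n k (p i) ≤ (n:ℤ) - 1
    rw [zsig_in n k _ h0 (by omega)]
    have hlt : (p i).toNat < n := by omega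
    have := sig_lt n k _ hlt
    omega
  · -- InjOn
    intro p hp q hq he
    funext i
    have h1 : zsig n k (p i) = zsig n k (q i) := congrFun he i
    obtain ⟨hp0, hp1⟩ := hp i
    obtain ⟨hq0, hq1⟩ := hq i
    rw [zsig_in n k _ hp0 (by omega), zsig_in n k _ hq0 (by omega)] at h1
    have h2 : sig n k (p i).toNat = sig n k (q i).toNat := by exact_mod_cast h1
    have h3 := sig_inj n k _ _ (by omega : (p i).toNat < n) (by omega : (q i).toNat < n) h2
    omega
  · -- SurjOn
    intro q hq
    have c : ∀ i, ∃ x, x < n ∧ sig n k x = (q i).toNat := by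
      intro i
      obtain ⟨h0, h1⟩ := hq i
      exact sig_surj n k _ (by omega)
    choose xf hxlt hxe using c
    refine ⟨fun i => (xf i : ℤ), fun i => ⟨by positivity,
      by show ((xf i : ℕ) : ℤ) ≤ (n:ℤ) - 1; have := hxlt i; omega⟩, ?_⟩
    funext i
    show zsig n k ((xf i : ℕ) : ℤ) = q i
    rw [zsig_in n k _ (by positivity) (by exact_mod_cast hxlt i)]
    rw [Int.toNat_natCast, hxe i]
    obtain ⟨h0, _⟩ := hq i
    omega
  · -- the spreading inequality
    intro p hp q hq hne
    rw [floor_sqrt_third n, ← hkdef]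
    rcases Nat.eq_zero_or_pos k with hk0 | hk1
    · rw [hk0]; positivity
    obtain ⟨i0, hi0⟩ := Function.ne_iff.mp hne
    obtain ⟨hp0, hp1⟩ := hp i0
    obtain ⟨hq0, hq1⟩ := hq i0
    set a := (p i0).toNat with hadef
    set b := (q i0).toNat with hbdef
    have ha : (a:ℤ) = p i0 := Int.toNat_of_nonneg hp0
    have hb : (b:ℤ) = q i0 := Int.toNat_of_nonneg hq0
    have haln : a < n := by omega
    have hbln : b < n := by omega
    have hab : a ≠ b := by omega
    have key : 2*k ≤ ((q i0 - p i0).natAbs) + ((zsig n k (q i0) - zsig n k (p i0)).natAbs) := by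
      rw [zsig_in n k _ hp0 (by omega), zsig_in n k _ hq0 (by omega), ← hadef, ← hbdef]
      have e1 : (q i0 - p i0).natAbs = max a b - min a b := by omega
      have e2 : (((sig n k b : ℕ):ℤ) - ((sig n k a : ℕ):ℤ)).natAbs
          = max (sig n k a) (sig n k b) - min (sig n k a) (sig n k b) := by omega
      rw [e1, e2]
      rcases lt_or_gt_of_ne hab with h | h
      · have := sig_spread n k a b hk1 hk3 hbln h
        omega
      · have := sig_spread n k b a hk1 hk3 haln h
        omega
    have m1 : (q i0 - p i0).natAbs ≤ Finset.univ.sup fun i => (q i - p i).natAbs :=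
      Finset.le_sup (f := fun i => (q i - p i).natAbs) (Finset.mem_univ i0)
    have m2 : ((zsig n k (q i0) - zsig n k (p i0)).natAbs) ≤
        Finset.univ.sup fun i => (zsig n k (q i) - zsig n k (p i)).natAbs :=
      Finset.le_sup (f := fun i => (zsig n k (q i) - zsig n k (p i)).natAbs)
        (Finset.mem_univ i0)
    have : 2*k ≤ (Finset.univ.sup fun i => (q i - p i).natAbs)
        + Finset.univ.sup fun i => (zsig n k (q i) - zsig n k (p i)).natAbs := by omega
    exact_mod_cast this


lemma floor_sqrt_nat (m : ℕ) : ⌊Real.sqrt (m:ℝ)⌋ = (Nat.sqrt m : ℤ) := by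
  have hk3 : Nat.sqrt m * Nat.sqrt m ≤ m := Nat.sqrt_le _
  have hk4 : m < (Nat.sqrt m + 1) * (Nat.sqrt m + 1) := by
    have h1 := Nat.lt_succ_sqrt m
    simp only [Nat.succ_eq_add_one] at h1
    omega
  set b := Nat.sqrt m with hbdef
  rw [Int.floor_eq_iff]
  constructor
  · rw [show ((b:ℤ):ℝ) = (b:ℝ) by push_cast; ring]
    rw [Real.le_sqrt (by positivity) (by positivity)]
    have : ((b*b : ℕ) : ℝ) ≤ (m:ℝ) := by exact_mod_cast hk3
    push_cast at this ⊢
    nlinarith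
  · have h2 : Real.sqrt (m:ℝ) < (b:ℝ)+1 := by
      rw [Real.sqrt_lt' (by positivity)]
      have : (m:ℝ) < (((b+1)*(b+1) : ℕ) : ℝ) := by exact_mod_cast hk4
      push_cast at this ⊢
      nlinarith
    push_cast
    exact h2

lemma part2 (d n : ℕ) (hd : 2 ≤ d) (hn : 2 ≤ n)
    (g : (Fin d → ℤ) → (Fin d → ℤ))
    (hg : Set.BijOn g {p | ∀ i, 0 ≤ p i ∧ p i ≤ (n : ℤ) - 1}
      {p | ∀ i, 0 ≤ p i ∧ p i ≤ (n : ℤ) - 1}) :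
    ∃ p ∈ {p : Fin d → ℤ | ∀ i, 0 ≤ p i ∧ p i ≤ (n : ℤ) - 1},
      ∃ q ∈ {p : Fin d → ℤ | ∀ i, 0 ≤ p i ∧ p i ≤ (n : ℤ) - 1}, p ≠ q ∧
        ((Finset.univ.sup fun i => (q i - p i).natAbs : ℕ) : ℤ) +
            ((Finset.univ.sup fun i => (g q i - g p i).natAbs : ℕ) : ℤ) ≤
          ⌈Real.sqrt ((n : ℝ) - 1)⌉ + ⌊Real.sqrt ((n : ℝ) - 1)⌋ := by
  set m := n - 1 with hmdef
  have hm1 : 1 ≤ m := by omega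
  have hmr : (n:ℝ) - 1 = ((m : ℕ) : ℝ) := by
    rw [hmdef, Nat.cast_sub (by omega)]; push_cast; ring
  rw [hmr, floor_sqrt_nat m]
  set b := Nat.sqrt m with hbdef
  set aZ := ⌈Real.sqrt ((m:ℕ):ℝ)⌉ with haZdef
  have hbb : b * b ≤ m := by rw [hbdef]; exact Nat.sqrt_le m
  have hbb2 : m < (b+1)*(b+1) := by
    have h1 := Nat.lt_succ_sqrt m
    simp only [Nat.succ_eq_add_one] at h1
    rw [hbdef]; omega
  have hb1 : 1 ≤ b := by rw [hbdef]; have := Nat.sqrt_pos (n := m); omega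
  have h1 : (b:ℤ) ≤ aZ := by rw [← floor_sqrt_nat m]; exact Int.floor_le_ceil _
  have h2 : aZ ≤ (b:ℤ) + 1 := by
    rw [haZdef, Int.ceil_le]
    have hlt : Real.sqrt ((m:ℕ):ℝ) < (b:ℝ)+1 := by
      rw [Real.sqrt_lt' (by positivity)]
      have : (m:ℝ) < (((b+1)*(b+1) : ℕ) : ℝ) := by exact_mod_cast hbb2
      push_cast at this ⊢
      nlinarith
    have : ((((b:ℤ)+1) : ℤ) : ℝ) = (b:ℝ)+1 := by push_cast; ring
    rw [this]
    exact le_of_lt hlt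
  have h3 : 1 ≤ aZ := by
    rw [haZdef]
    have hs : (1:ℝ) ≤ Real.sqrt ((m:ℕ):ℝ) := by
      rw [show (1:ℝ) = Real.sqrt 1 by rw [Real.sqrt_one]]
      exact Real.sqrt_le_sqrt (by exact_mod_cast hm1)
    calc (1:ℤ) = ⌈(1:ℝ)⌉ := by norm_num
      _ ≤ ⌈Real.sqrt ((m:ℕ):ℝ)⌉ := Int.ceil_le_ceil hs
  have h4 : (n:ℤ) ≤ aZ * ((b:ℤ)+1) := by
    rcases eq_or_lt_of_le h1 with he | hlt
    · -- aZ = b, so m = b*b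
      have hle : Real.sqrt ((m:ℕ):ℝ) ≤ (b:ℝ) := by
        have hcl : ⌈Real.sqrt ((m:ℕ):ℝ)⌉ ≤ (b:ℤ) := by rw [← haZdef]; omega
        have := Int.ceil_le.mp hcl
        exact_mod_cast this
      have hmb : m ≤ b * b := by
        have hsq : ((m:ℕ):ℝ) ≤ ((b:ℝ))^2 := by
          have := Real.sq_sqrt (show (0:ℝ) ≤ ((m:ℕ):ℝ) by positivity)
          nlinarith [Real.sqrt_nonneg ((m:ℕ):ℝ)]
        have : ((m:ℕ):ℝ) ≤ (((b*b : ℕ)):ℝ) := by push_cast at hsq ⊢; nlinarith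
        exact_mod_cast this
      have hme : m = b * b := le_antisymm hmb hbb
      rw [← he]
      have : (n:ℤ) = ((b*b+1 : ℕ) : ℤ) := by
        have : n = b*b+1 := by omega
        exact_mod_cast this
      rw [this]
      push_cast
      nlinarith [hb1]
    · -- aZ = b+1
      have he : aZ = (b:ℤ)+1 := by omega
      rw [he]
      have : (n:ℤ) ≤ (((b+1)*(b+1) : ℕ) : ℤ) := by
        have : n ≤ (b+1)*(b+1) := by omega
        exact_mod_cast this
      push_cast at this ⊢
      nlinarith
  have h5 : aZ ≤ (n:ℤ) - 1 := by
    rw [haZdef, Int.ceil_le]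
    have hss : Real.sqrt ((m:ℕ):ℝ) ≤ ((m:ℕ):ℝ) := sqrt_le_self' m hm1
    have heq2 : (((n:ℤ) - 1 : ℤ) : ℝ) = ((m:ℕ):ℝ) := by push_cast; exact hmr
    rw [heq2]
    exact hss
  -- pigeonhole setup
  set aN := aZ.toNat with haNdef
  have haN : (aN:ℤ) = aZ := Int.toNat_of_nonneg (by omega)
  have h4N : n ≤ aN * (b+1) := by
    have : (n:ℤ) ≤ ((aN * (b+1) : ℕ) : ℤ) := by push_cast [haN]; omega
    exact_mod_cast this
  set sF : Finset (Fin d → ℤ) := Fintype.piFinset (fun _ => Finset.Icc (0:ℤ) aZ) with hsF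
  set tF : Finset (Fin d → ℤ) := Fintype.piFinset (fun _ => Finset.Icc (0:ℤ) (aZ-1)) with htF
  have hcards : tF.card < sF.card := by
    rw [hsF, htF, Fintype.card_piFinset, Fintype.card_piFinset]
    have c1 : (Finset.Icc (0:ℤ) aZ).card = aN+1 := by rw [Int.card_Icc]; omega
    have c2 : (Finset.Icc (0:ℤ) (aZ-1)).card = aN := by rw [Int.card_Icc]; omega
    simp only [c1, c2, Finset.prod_const, Finset.card_univ, Fintype.card_fin]
    exact Nat.pow_lt_pow_left (by omega) (by omega)
  have hmemS : ∀ p ∈ sF, p ∈ {p : Fin d → ℤ | ∀ i, 0 ≤ p i ∧ p i ≤ (n : ℤ) - 1} := by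
    intro p hp i
    have := Finset.mem_Icc.mp ((Fintype.mem_piFinset.mp hp) i)
    constructor <;> omega
  have hmaps : ∀ p ∈ sF, (fun i => (((g p i).toNat / (b+1) : ℕ) : ℤ)) ∈ tF := by
    intro p hp
    have hgS := hg.mapsTo (hmemS p hp)
    rw [Fintype.mem_piFinset]
    intro i
    obtain ⟨hg0, hg1⟩ := hgS i
    rw [Finset.mem_Icc]
    have hv : (g p i).toNat ≤ n - 1 := by omega
    have hq : (g p i).toNat / (b+1) < aN := by
      rw [Nat.div_lt_iff_lt_mul (by omega)]
      omega
    constructor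
    · positivity
    · have : (((g p i).toNat / (b+1) : ℕ) : ℤ) ≤ (aN:ℤ) - 1 := by
        have : ((g p i).toNat / (b+1) : ℕ) ≤ aN - 1 := by omega
        have h' : (((g p i).toNat / (b+1) : ℕ) : ℤ) ≤ ((aN - 1 : ℕ) : ℤ) := by exact_mod_cast this
        have h'' : ((aN - 1 : ℕ) : ℤ) = (aN:ℤ) - 1 := by
          have : 1 ≤ aN := by omega
          omega
        omega
      omega
  obtain ⟨p, hp, q, hq, hne, heq⟩ := Finset.exists_ne_map_eq_of_card_lt_of_maps_to hcards hmaps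
  refine ⟨p, hmemS p hp, q, hmemS q hq, hne, ?_⟩
  have sup1 : (Finset.univ.sup fun i => (q i - p i).natAbs) ≤ aN := by
    apply Finset.sup_le
    intro i _
    have hpi := Finset.mem_Icc.mp ((Fintype.mem_piFinset.mp hp) i)
    have hqi := Finset.mem_Icc.mp ((Fintype.mem_piFinset.mp hq) i)
    omega
  have sup2 : (Finset.univ.sup fun i => (g q i - g p i).natAbs) ≤ b := by
    apply Finset.sup_le
    intro i _
    have hgp := (hg.mapsTo (hmemS p hp)) i
    have hgq := (hg.mapsTo (hmemS q hq)) i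
    have hqi : ((g p i).toNat / (b+1) : ℕ) = ((g q i).toNat / (b+1) : ℕ) := by
      have := congrFun heq i
      try simp only at this
      exact_mod_cast this
    have e1 := Nat.div_add_mod ((g p i).toNat) (b+1)
    have e2 := Nat.div_add_mod ((g q i).toNat) (b+1)
    have m1 : ((g p i).toNat) % (b+1) < b+1 := Nat.mod_lt _ (by omega)
    have m2 : ((g q i).toNat) % (b+1) < b+1 := Nat.mod_lt _ (by omega)
    rw [hqi] at e1
    obtain ⟨hg0p, _⟩ := hgp
    obtain ⟨hg0q, _⟩ := hgq
    omega
  omega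


end S17


theorem stmt_17 (d n : ℕ) (hd : 2 ≤ d) (hn : 2 ≤ n) :
    (∃ f : (Fin d → ℤ) → (Fin d → ℤ),
      Set.BijOn f {p | ∀ i, 0 ≤ p i ∧ p i ≤ (n : ℤ) - 1}
        {p | ∀ i, 0 ≤ p i ∧ p i ≤ (n : ℤ) - 1} ∧
      ∀ p ∈ {p : Fin d → ℤ | ∀ i, 0 ≤ p i ∧ p i ≤ (n : ℤ) - 1},
        ∀ q ∈ {p : Fin d → ℤ | ∀ i, 0 ≤ p i ∧ p i ≤ (n : ℤ) - 1}, p ≠ q →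
          2 * ⌊Real.sqrt ((n : ℝ) / 3)⌋ ≤
            ((Finset.univ.sup fun i => (q i - p i).natAbs : ℕ) : ℤ) +
              ((Finset.univ.sup fun i => (f q i - f p i).natAbs : ℕ) : ℤ)) ∧
    (∀ g : (Fin d → ℤ) → (Fin d → ℤ),
      Set.BijOn g {p | ∀ i, 0 ≤ p i ∧ p i ≤ (n : ℤ) - 1}
        {p | ∀ i, 0 ≤ p i ∧ p i ≤ (n : ℤ) - 1} →
      ∃ p ∈ {p : Fin d → ℤ | ∀ i, 0 ≤ p i ∧ p i ≤ (n : ℤ) - 1},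
        ∃ q ∈ {p : Fin d → ℤ | ∀ i, 0 ≤ p i ∧ p i ≤ (n : ℤ) - 1}, p ≠ q ∧
          ((Finset.univ.sup fun i => (q i - p i).natAbs : ℕ) : ℤ) +
              ((Finset.univ.sup fun i => (g q i - g p i).natAbs : ℕ) : ℤ) ≤
            ⌈Real.sqrt ((n : ℝ) - 1)⌉ + ⌊Real.sqrt ((n : ℝ) - 1)⌋) := by
  constructor
  · exact S17.part1 d n hn
  · intro g hg
    exact S17.part2 d n hd hn g hg
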